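/- Let f : ℝ^d → ℝ be L-Lipschitz with respect to the Euclidean norm, and σ > 0. Then for every x ∈ ℝ^d, the second moment of the control-variate Stein gradient estimator integrand is bounded independently of σ: E_{δ∼N(0,σ²I)}[ ‖(δ/σ²) · (f(x+δ) − f(x))‖² ] ≤ L² d (d + 2). -/

import Mathlib

open MeasureTheory Real
open scoped ENNReal NNReal

/-- The Gaussian probability measure `N(0, σ²I)` on `ℝ^d`, defined via its density
with respect to the Lebesgue measure. -/
noncomputable def gaussianMeasure (d : ℕ) (σ : ℝ) :
    Measure (EuclideanSpace ℝ (Fin d)) :=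
  volume.withDensity fun δ =>
    ENNReal.ofReal ((2 * π * σ ^ 2) ^ (-(d : ℝ) / 2) * Real.exp (-‖δ‖ ^ 2 / (2 * σ ^ 2)))

section Aux

variable {d : ℕ} {σ : ℝ}

private lemma rho_meas (d : ℕ) (σ : ℝ) :
    Measurable fun δ : EuclideanSpace ℝ (Fin d) =>
      ((2 * π * σ ^ 2) ^ (-(d : ℝ) / 2) * Real.exp (-‖δ‖ ^ 2 / (2 * σ ^ 2))).toNNReal := by
  fun_prop

private lemma gaussianMeasure_eq (d : ℕ) (σ : ℝ) :
    gaussianMeasure d σ = volume.withDensity fun δ =>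
      (((2 * π * σ ^ 2) ^ (-(d : ℝ) / 2) * Real.exp (-‖δ‖ ^ 2 / (2 * σ ^ 2))).toNNReal
        : ℝ≥0∞) := rfl

private lemma integral_gaussianMeasure (hσ : 0 < σ)
    (g : EuclideanSpace ℝ (Fin d) → ℝ) :
    ∫ δ, g δ ∂(gaussianMeasure d σ) =
      ∫ δ, ((2 * π * σ ^ 2) ^ (-(d : ℝ) / 2) * Real.exp (-‖δ‖ ^ 2 / (2 * σ ^ 2))) * g δ := by
  rw [gaussianMeasure_eq, integral_withDensity_eq_integral_smul (rho_meas d σ)]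
  refine integral_congr_ae (Filter.Eventually.of_forall fun δ => ?_)
  show (((2 * π * σ ^ 2) ^ (-(d : ℝ) / 2) * Real.exp (-‖δ‖ ^ 2 / (2 * σ ^ 2))).toNNReal
      : ℝ≥0) • g δ = _
  rw [NNReal.smul_def, Real.coe_toNNReal _ (by positivity), smul_eq_mul]

private lemma pow4_bound {b : ℝ} (hb : 0 < b) (r : ℝ) :
    r ^ 4 * Real.exp (-b * r ^ 2) ≤ 16 / b ^ 2 * Real.exp (-(b / 2) * r ^ 2) := by
  set u : ℝ := b / 2 * r ^ 2 with hu
  have hu0 : 0 ≤ u := by positivity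
  have h1 : u / 2 + 1 ≤ Real.exp (u / 2) := Real.add_one_le_exp _
  have h2 : (u / 2 + 1) ^ 2 ≤ Real.exp u := by
    rw [show u = u / 2 + u / 2 by ring, Real.exp_add]
    have h0 : (0:ℝ) ≤ u / 2 + 1 := by linarith
    nlinarith [Real.exp_pos (u / 2)]
  have h3 : u ^ 2 ≤ 4 * Real.exp u := by nlinarith
  have hE := Real.exp_pos (-(b / 2) * r ^ 2)
  have hexp : Real.exp (-b * r ^ 2)
      = Real.exp (-(b / 2) * r ^ 2) * Real.exp (-(b / 2) * r ^ 2) := by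
    rw [← Real.exp_add]; ring_nf
  have hinv : Real.exp (-(b / 2) * r ^ 2) * Real.exp u = 1 := by
    rw [← Real.exp_add, show -(b / 2) * r ^ 2 + u = 0 by rw [hu]; ring, Real.exp_zero]
  have hb2 : (0:ℝ) < b ^ 2 := by positivity
  have key : r ^ 4 * Real.exp (-(b / 2) * r ^ 2) ≤ 16 / b ^ 2 := by
    have h4 : u ^ 2 * Real.exp (-(b / 2) * r ^ 2)
        ≤ 4 * (Real.exp u * Real.exp (-(b / 2) * r ^ 2)) := by
      nlinarith [mul_nonneg (sub_nonneg.mpr h3) hE.le]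
    rw [mul_comm (Real.exp u), hinv, mul_one] at h4
    have hu2 : u ^ 2 = b ^ 2 / 4 * r ^ 4 := by rw [hu]; ring
    rw [hu2] at h4
    rw [le_div_iff₀ hb2]
    nlinarith
  rw [hexp]
  nlinarith [mul_le_mul_of_nonneg_right key hE.le]

private lemma integrable_pow4 (hσ : 0 < σ) :
    Integrable (fun δ : EuclideanSpace ℝ (Fin d) => ‖δ‖ ^ 4) (gaussianMeasure d σ) := by
  rw [gaussianMeasure_eq, integrable_withDensity_iff_integrable_smul (rho_meas d σ)]
  have heq : (fun δ : EuclideanSpace ℝ (Fin d) =>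
      (((2 * π * σ ^ 2) ^ (-(d : ℝ) / 2) * Real.exp (-‖δ‖ ^ 2 / (2 * σ ^ 2))).toNNReal
        : ℝ≥0) • (‖δ‖ ^ 4))
      = fun δ => ((2 * π * σ ^ 2) ^ (-(d : ℝ) / 2) * Real.exp (-‖δ‖ ^ 2 / (2 * σ ^ 2)))
          * ‖δ‖ ^ 4 := by
    funext δ
    rw [NNReal.smul_def, Real.coe_toNNReal _ (by positivity), smul_eq_mul]
  rw [heq]
  set b : ℝ := (2 * σ ^ 2)⁻¹ with hb
  have hb0 : 0 < b := by positivity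
  set C : ℝ := (2 * π * σ ^ 2) ^ (-(d : ℝ) / 2) with hC
  have hC0 : 0 < C := by positivity
  -- integrable dominating gaussian
  have base : Integrable (fun v : EuclideanSpace ℝ (Fin d) =>
      Real.exp (-(b / 2) * ‖v‖ ^ 2)) volume := by
    have h := (GaussianFourier.integrable_cexp_neg_mul_sq_norm_add_of_euclideanSpace
      (ι := Fin d) (b := ((b / 2 : ℝ) : ℂ)) (by simpa using half_pos hb0) 0 0).norm
    refine h.congr (Filter.Eventually.of_forall fun v => ?_)
    simp [Complex.norm_exp, ← Complex.ofReal_pow]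
  refine (base.const_mul (C * (16 / b ^ 2))).mono' ?_ ?_
  · exact Continuous.aestronglyMeasurable (by fun_prop)
  · refine Filter.Eventually.of_forall fun v => ?_
    have h1 : -‖v‖ ^ 2 / (2 * σ ^ 2) = -b * ‖v‖ ^ 2 := by
      rw [hb]; field_simp
    rw [Real.norm_eq_abs, abs_of_nonneg (by positivity), h1, mul_assoc]
    rw [mul_assoc]
    refine mul_le_mul_of_nonneg_left ?_ hC0.le
    have := pow4_bound hb0 ‖v‖
    nlinarith [Real.exp_pos (-b * ‖v‖^2), Real.exp_pos (-(b/2) * ‖v‖^2)]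

private lemma fourth_moment (hd : 0 < d) (hσ : 0 < σ) :
    ∫ δ, ‖δ‖ ^ 4 ∂(gaussianMeasure d σ) = σ ^ 4 * (d * (d + 2)) := by
  haveI : Nonempty (Fin d) := ⟨⟨0, hd⟩⟩
  haveI : Nontrivial (EuclideanSpace ℝ (Fin d)) := by
    refine ⟨EuclideanSpace.single ⟨0, hd⟩ (1:ℝ), 0, fun h => ?_⟩
    have h2 := congrArg norm h
    rw [EuclideanSpace.norm_single, norm_zero, norm_one] at h2
    exact one_ne_zero h2
  rw [integral_gaussianMeasure hσ]
  set C : ℝ := (2 * π * σ ^ 2) ^ (-(d : ℝ) / 2) with hC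
  set F : ℝ → ℝ := fun y => C * Real.exp (-y ^ 2 / (2 * σ ^ 2)) * y ^ 4 with hF
  have hmain := MeasureTheory.integral_fun_norm_addHaar
    (volume : Measure (EuclideanSpace ℝ (Fin d))) F
  rw [show (∫ δ : EuclideanSpace ℝ (Fin d),
      C * Real.exp (-‖δ‖ ^ 2 / (2 * σ ^ 2)) * ‖δ‖ ^ 4) = ∫ δ : EuclideanSpace ℝ (Fin d), F ‖δ‖
    from rfl, hmain, finrank_euclideanSpace_fin]
  -- volume of the unit ball
  have hball : ((volume (Metric.ball (0 : EuclideanSpace ℝ (Fin d)) 1)).toReal : ℝ)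
      = Real.sqrt π ^ d / Real.Gamma (d / 2 + 1) := by
    rw [EuclideanSpace.volume_ball]
    simp only [Fintype.card_fin, ENNReal.ofReal_one, one_pow, one_mul]
    exact ENNReal.toReal_ofReal (div_nonneg (pow_nonneg (Real.sqrt_nonneg _) _)
      (Real.Gamma_pos_of_pos (by positivity)).le)
  -- the radial integral
  set b : ℝ := (2 * σ ^ 2)⁻¹ with hb
  have hb0 : 0 < b := by rw [hb]; positivity
  have hrad : (∫ y in Set.Ioi (0:ℝ), y ^ (d - 1) • F y)
      = C * (b ^ (-(((d:ℝ) + 3) + 1) / 2) * (1 / 2) * Real.Gamma ((((d:ℝ) + 3) + 1) / 2)) := by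
    rw [← integral_rpow_mul_exp_neg_mul_rpow (by norm_num : (0:ℝ) < 2)
      (by have h : (0:ℝ) ≤ (d:ℝ) := Nat.cast_nonneg d; linarith : (-1:ℝ) < (d:ℝ) + 3) hb0, ← integral_const_mul]
    refine setIntegral_congr_fun measurableSet_Ioi fun y hy => ?_
    have hy0 : (0:ℝ) < y := hy
    have h1 : y ^ ((d:ℝ) + 3) = y ^ (d + 3) := by
      rw [show ((d:ℝ) + 3) = ((d + 3 : ℕ) : ℝ) by push_cast; ring, Real.rpow_natCast]
    have h2 : y ^ ((2:ℝ)) = y ^ (2:ℕ) := by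
      rw [show ((2:ℝ)) = ((2 : ℕ) : ℝ) by norm_num, Real.rpow_natCast]
    have h3 : y ^ (d - 1) * y ^ 4 = y ^ (d + 3) := by
      rw [← pow_add]; congr 1; omega
    have h4 : -y ^ 2 / (2 * σ ^ 2) = -b * y ^ 2 := by rw [hb]; field_simp
    simp only [smul_eq_mul, hF]
    rw [h1, h2, h4, ← h3]
    ring
  rw [hrad, measureReal_def, hball]
  -- now pure computation
  set A : ℝ := Real.Gamma ((d:ℝ) / 2 + 1) with hA
  have hA0 : 0 < A := Real.Gamma_pos_of_pos (by positivity)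
  have e1 : C = (2 * σ ^ 2) ^ (-(d : ℝ) / 2) * π ^ (-(d : ℝ) / 2) := by
    rw [hC, show 2 * π * σ ^ 2 = (2 * σ ^ 2) * π by ring,
      Real.mul_rpow (by positivity) (by positivity)]
  have e2 : b ^ (-(((d:ℝ) + 3) + 1) / 2) = (2 * σ ^ 2) ^ (((d:ℝ) + 4) / 2) := by
    rw [hb, Real.inv_rpow (by positivity), ← Real.rpow_neg (by positivity)]
    congr 1
    ring
  have e3 : (2 * σ ^ 2) ^ (-(d : ℝ) / 2) * (2 * σ ^ 2) ^ (((d:ℝ) + 4) / 2) = 4 * σ ^ 4 := by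
    rw [← Real.rpow_add (by positivity), show -(d:ℝ) / 2 + ((d:ℝ) + 4) / 2 = 2 by ring,
      show (2:ℝ) = ((2:ℕ):ℝ) by norm_num, Real.rpow_natCast]
    ring
  have e4 : Real.sqrt π ^ d = π ^ ((d:ℝ) / 2) := by
    rw [Real.sqrt_eq_rpow, ← Real.rpow_natCast (π ^ ((1:ℝ)/2)) d, ← Real.rpow_mul pi_pos.le]
    congr 1; ring
  have e5 : π ^ ((d:ℝ) / 2) * π ^ (-(d:ℝ) / 2) = 1 := by
    rw [← Real.rpow_add pi_pos, show (d:ℝ) / 2 + -(d:ℝ) / 2 = 0 by ring, Real.rpow_zero]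
  have e6 : Real.Gamma ((((d:ℝ) + 3) + 1) / 2) = ((d:ℝ) / 2 + 1) * A := by
    rw [show (((d:ℝ) + 3) + 1) / 2 = ((d:ℝ) / 2 + 1) + 1 by ring,
      Real.Gamma_add_one (by positivity)]
  rw [e1, e2, e4, e6, nsmul_eq_mul, smul_eq_mul]
  set P : ℝ := π ^ ((d:ℝ) / 2)
  set Q : ℝ := π ^ (-(d:ℝ) / 2)
  set R : ℝ := (2 * σ ^ 2) ^ (-(d : ℝ) / 2)
  set S : ℝ := (2 * σ ^ 2) ^ (((d:ℝ) + 4) / 2)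
  field_simp
  linear_combination (R * S) * e5 + e3

end Aux

theorem control_variate_gradient_estimator_second_moment (d : ℕ) (hd : 0 < d)
    (σ : ℝ) (hσ : 0 < σ)
    (f : EuclideanSpace ℝ (Fin d) → ℝ)
    (L : ℝ) (hf : ∀ x y, |f x - f y| ≤ L * ‖x - y‖) :
    ∀ x, (∫ δ, ‖((f (x + δ) - f x) / σ ^ 2) • δ‖ ^ 2 ∂(gaussianMeasure d σ)) ≤
      L ^ 2 * d * (d + 2) := by
  intro x
  have hL : 0 ≤ L := by
    have h := hf (EuclideanSpace.single ⟨0, hd⟩ (1:ℝ)) 0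
    rw [sub_zero] at h
    have hnorm : ‖EuclideanSpace.single (⟨0, hd⟩ : Fin d) (1:ℝ)‖ = 1 := by
      simp [EuclideanSpace.norm_single]
    rw [hnorm, mul_one] at h
    exact le_trans (abs_nonneg _) h
  have hbound : ∀ δ : EuclideanSpace ℝ (Fin d),
      ‖((f (x + δ) - f x) / σ ^ 2) • δ‖ ^ 2 ≤ L ^ 2 / σ ^ 4 * ‖δ‖ ^ 4 := by
    intro δ
    have h1 : |f (x + δ) - f x| ≤ L * ‖δ‖ := by
      have := hf (x + δ) x
      rwa [add_sub_cancel_left] at this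
    rw [norm_smul, Real.norm_eq_abs, abs_div, abs_of_pos (by positivity : (0:ℝ) < σ ^ 2)]
    calc (|f (x + δ) - f x| / σ ^ 2 * ‖δ‖) ^ 2
        ≤ (L * ‖δ‖ / σ ^ 2 * ‖δ‖) ^ 2 := by
          apply pow_le_pow_left₀ (by positivity)
          gcongr
      _ = L ^ 2 / σ ^ 4 * ‖δ‖ ^ 4 := by field_simp
  have hmono := integral_mono_of_nonneg
    (f := fun δ : EuclideanSpace ℝ (Fin d) => ‖((f (x + δ) - f x) / σ ^ 2) • δ‖ ^ 2)
    (g := fun δ => L ^ 2 / σ ^ 4 * ‖δ‖ ^ 4)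
    (μ := gaussianMeasure d σ)
    (Filter.Eventually.of_forall fun δ => by positivity)
    ((integrable_pow4 hσ).const_mul _)
    (Filter.Eventually.of_forall hbound)
  refine le_trans hmono ?_
  rw [integral_const_mul, fourth_moment hd hσ]
  have hσ4 : σ ^ 4 ≠ 0 := by positivity
  exact le_of_eq (by field_simp)
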